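/- Fix n ≥ 4 and let G(n) be the Keel presentation group of Pic(\bar{M}_{0,n}). Then G(n) is generated as an abelian group by the images of the generators δ_A with A non-adjacent; i.e., the classes of the non-adjacent divisors span G(n). -/

import Mathlib

open scoped Classical

/-- A subset `A ⊆ ZMod n` is a cyclic interval if `A = {a, a+1, …, a+(k−1)}`
for some `a ∈ ZMod n` and `k ≥ 1` (addition in `ZMod n`). -/
def IsCyclicInterval {n : ℕ} (A : Finset (ZMod n)) : Prop :=
  ∃ (a : ZMod n) (k : ℕ), 1 ≤ k ∧ A = (Finset.range k).image (fun i : ℕ => a + (i : ZMod n))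

/-- The index set `Dn = {A ⊆ ZMod n : 2 ≤ |A| ≤ n−2}` of boundary divisors. -/
abbrev DivIdx (n : ℕ) := {A : Finset (ZMod n) // 2 ≤ A.card ∧ A.card ≤ n - 2}

/-- The complement, as an element of `Dn`. -/
noncomputable def complIdx (n : ℕ) (hn : 4 ≤ n) (A : DivIdx n) : DivIdx n :=
  haveI : NeZero n := ⟨by omega⟩
  ⟨(A : Finset (ZMod n))ᶜ, by
    have h1 := A.prop.1
    have h2 := A.prop.2
    have hc : (A : Finset (ZMod n))ᶜ.card = n - (A : Finset (ZMod n)).card := by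
      rw [Finset.card_compl, ZMod.card]
    omega⟩

/-- The Keel relation element associated to four (pairwise distinct) points
`i, j, k, l`: `(Σ_{A : i,j∈A, k,l∉A} δ_A) − (Σ_{A : i,k∈A, j,l∉A} δ_A)`. -/
noncomputable def keelElt (n : ℕ) (hn : 4 ≤ n) (i j k l : ZMod n) :
    FreeAbelianGroup (DivIdx n) :=
  haveI : NeZero n := ⟨by omega⟩
  (∑ A ∈ Finset.univ.filter (fun A : DivIdx n =>
      i ∈ A.val ∧ j ∈ A.val ∧ k ∉ A.val ∧ l ∉ A.val), FreeAbelianGroup.of A)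
  - (∑ A ∈ Finset.univ.filter (fun A : DivIdx n =>
      i ∈ A.val ∧ k ∈ A.val ∧ j ∉ A.val ∧ l ∉ A.val), FreeAbelianGroup.of A)

/-- The subgroup `R` of relations of the Keel presentation: generated by
`δ_A − δ_{A^c}` for `A ∈ Dn`, together with the Keel relations for every four
pairwise distinct points `i, j, k, l ∈ ZMod n`. -/
noncomputable def KeelRelations (n : ℕ) (hn : 4 ≤ n) :
    AddSubgroup (FreeAbelianGroup (DivIdx n)) :=
  AddSubgroup.closure
    ({x | ∃ A : DivIdx n, x = FreeAbelianGroup.of A - FreeAbelianGroup.of (complIdx n hn A)} ∪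
     {x | ∃ i j k l : ZMod n, i ≠ j ∧ i ≠ k ∧ i ≠ l ∧ j ≠ k ∧ j ≠ l ∧ k ≠ l ∧
        x = keelElt n hn i j k l})

/-- The Keel presentation group `G(n) = F/R` of `Pic(M̄_{0,n})`. -/
abbrev KeelGroup (n : ℕ) (hn : 4 ≤ n) :=
  FreeAbelianGroup (DivIdx n) ⧸ KeelRelations n hn



section Helpers
variable {n : ℕ} [NeZero n]

lemma zmod_mem_image_range_iff (a : ZMod n) {c : ℕ} (hc : c ≤ n) (x : ZMod n) :
    x ∈ (Finset.range c).image (fun i : ℕ => a + (i : ZMod n)) ↔ (x - a).val < c := by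
  simp only [Finset.mem_image, Finset.mem_range]
  constructor
  · rintro ⟨i, hi, rfl⟩
    have h1 : a + (i : ZMod n) - a = (i : ZMod n) := by ring
    rw [h1, ZMod.val_cast_of_lt (lt_of_lt_of_le hi hc)]
    exact hi
  · intro h
    refine ⟨(x - a).val, h, ?_⟩
    rw [ZMod.natCast_val, ZMod.cast_id]
    ring

lemma zmod_val_sub_one {z : ZMod n} (hz : z.val ≠ 0) : (z - 1).val = z.val - 1 := by
  have h1 : ((z.val : ℕ) : ZMod n) = z := by rw [ZMod.natCast_val, ZMod.cast_id]
  have h2 : (z - 1 : ZMod n) = ((z.val - 1 : ℕ) : ZMod n) := by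
    rw [Nat.cast_sub (Nat.one_le_iff_ne_zero.mpr hz), Nat.cast_one, h1]
  rw [h2, ZMod.val_cast_of_lt (lt_of_le_of_lt (Nat.sub_le _ _) (ZMod.val_lt z))]

lemma zmod_natCast_ne_zero {t : ℕ} (h0 : 0 < t) (htn : t < n) : ((t : ℕ) : ZMod n) ≠ 0 := by
  intro h
  have := ZMod.val_cast_of_lt (n := n) htn
  rw [h, ZMod.val_zero] at this
  omega

lemma interval_start {B : Finset (ZMod n)} (hB : IsCyclicInterval B) {a : ZMod n}
    (ha : a ∈ B) (ha' : a - 1 ∉ B) :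
    ∃ m, 0 < m ∧ m ≤ n ∧ ∀ x, x ∈ B ↔ (x - a).val < m := by
  obtain ⟨a', k, hk, rfl⟩ := hB
  by_cases hkn : n ≤ k
  · exact absurd (by
      simp only [Finset.mem_image, Finset.mem_range]
      exact ⟨(a - 1 - a').val, lt_of_lt_of_le (ZMod.val_lt _) hkn, by
        rw [ZMod.natCast_val, ZMod.cast_id]; ring⟩) ha'
  · have hkn' : k ≤ n := le_of_not_ge hkn
    have hmem := fun x => zmod_mem_image_range_iff a' hkn' x
    have hu : (a - a').val < k := (hmem a).mp ha
    have hu0 : (a - a').val = 0 := by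
      by_contra h0
      apply ha'
      rw [hmem]
      have he : a - 1 - a' = (a - a') - 1 := by ring
      rw [he, zmod_val_sub_one h0]
      omega
    have haa : a' = a := by
      have h := (ZMod.val_eq_zero _).mp hu0
      have := sub_eq_zero.mp h
      exact this.symm
    subst haa
    exact ⟨k, hk, hkn', hmem⟩

lemma interval_vals (hn4 : 4 ≤ n) {c : ℕ} (hc2 : 2 ≤ c) (hcn : c ≤ n - 2) (a : ZMod n) :
    (a + ((c - 1 : ℕ) : ZMod n) - a).val = c - 1 ∧
    (a + ((c - 1 : ℕ) : ZMod n) + 1 - a).val = c ∧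
    (a - 1 - a).val = n - 1 := by
  refine ⟨?_, ?_, ?_⟩
  · have e1 : a + ((c-1:ℕ):ZMod n) - a = ((c-1:ℕ):ZMod n) := by ring
    rw [e1, ZMod.val_cast_of_lt (by omega)]
  · have e2 : a + ((c-1:ℕ):ZMod n) + 1 - a = ((c:ℕ):ZMod n) := by
      have hc : ((c-1:ℕ):ZMod n) = ((c:ℕ):ZMod n) - 1 := by
        rw [Nat.cast_sub (by omega), Nat.cast_one]
      rw [hc]; ring
    rw [e2, ZMod.val_cast_of_lt (by omega)]
  · have e3 : a - 1 - a = ((n-1:ℕ):ZMod n) := by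
      rw [Nat.cast_sub (by omega), Nat.cast_one, ZMod.natCast_self]; ring
    rw [e3, ZMod.val_cast_of_lt (by omega)]

lemma interval_eq (hn4 : 4 ≤ n) {c : ℕ} (hc2 : 2 ≤ c) (hcn : c ≤ n - 2) {a : ZMod n}
    {B : Finset (ZMod n)} (hB : IsCyclicInterval B)
    (ha : a ∈ B) (hb : a + ((c - 1 : ℕ) : ZMod n) ∈ B)
    (hb1 : a + ((c - 1 : ℕ) : ZMod n) + 1 ∉ B) (ha1 : a - 1 ∉ B) :
    B = (Finset.range c).image (fun i : ℕ => a + (i : ZMod n)) := by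
  obtain ⟨m, hm0, hmn, hmem⟩ := interval_start hB ha ha1
  obtain ⟨v1, v2, -⟩ := interval_vals hn4 hc2 hcn a
  have h1 : c - 1 < m := v1 ▸ (hmem _).mp hb
  have h2 : ¬ (c < m) := fun h => hb1 ((hmem _).mpr (by rw [v2]; exact h))
  have hmc : m = c := by omega
  ext x
  rw [hmem, zmod_mem_image_range_iff a (by omega), hmc]

lemma not_interval_R (hn4 : 4 ≤ n) {c : ℕ} (hc2 : 2 ≤ c) (hcn : c ≤ n - 2) {a : ZMod n}
    {B : Finset (ZMod n)} (hB : IsCyclicInterval B)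
    (ha : a ∈ B) (hb1 : a + ((c - 1 : ℕ) : ZMod n) + 1 ∈ B)
    (hb : a + ((c - 1 : ℕ) : ZMod n) ∉ B) (ha1 : a - 1 ∉ B) : False := by
  obtain ⟨m, hm0, hmn, hmem⟩ := interval_start hB ha ha1
  obtain ⟨v1, v2, -⟩ := interval_vals hn4 hc2 hcn a
  have h1 : c < m := v2 ▸ (hmem _).mp hb1
  have h2 : ¬ (c - 1 < m) := fun h => hb ((hmem _).mpr (by rw [v1]; exact h))
  omega

end Helpers

/-- `G(n)` is generated as an abelian group by the images of the
generators `δ_A` with `A` non-adjacent; i.e. the classes of the non-adjacent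
divisors span `G(n)`. -/
theorem nonadjacent_classes_span (n : ℕ) (hn : 4 ≤ n) :
    AddSubgroup.closure
      {x : KeelGroup n hn | ∃ A : DivIdx n, ¬ IsCyclicInterval (A : Finset (ZMod n)) ∧
        x = QuotientAddGroup.mk (FreeAbelianGroup.of A)} = ⊤ := by
  haveI : NeZero n := ⟨by omega⟩
  set S : Set (KeelGroup n hn) :=
    {x : KeelGroup n hn | ∃ A : DivIdx n, ¬ IsCyclicInterval (A : Finset (ZMod n)) ∧
        x = QuotientAddGroup.mk (FreeAbelianGroup.of A)} with hS
  suffices h : ∀ A : DivIdx n,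
      (QuotientAddGroup.mk (FreeAbelianGroup.of A) : KeelGroup n hn) ∈ AddSubgroup.closure S by
    rw [eq_top_iff]
    rintro x -
    obtain ⟨y, rfl⟩ := QuotientAddGroup.mk_surjective x
    induction y using FreeAbelianGroup.induction_on with
    | zero => exact zero_mem _
    | of x => exact h x
    | neg x ih =>
        have : (QuotientAddGroup.mk (-FreeAbelianGroup.of x) : KeelGroup n hn)
            = -(QuotientAddGroup.mk (FreeAbelianGroup.of x)) := rfl
        rw [this]
        exact neg_mem ih
    | add x y ihx ihy =>
        have : (QuotientAddGroup.mk (x + y) : KeelGroup n hn)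
            = QuotientAddGroup.mk x + QuotientAddGroup.mk y := rfl
        rw [this]
        exact add_mem ihx ihy
  intro A
  by_cases hA : IsCyclicInterval (A : Finset (ZMod n))
  · -- A is a cyclic interval; use the Keel relation
    obtain ⟨a, k, hk1, hAeq⟩ := hA
    -- k < n
    have hkn : k < n := by
      by_contra hkk
      push_neg at hkk
      have hun : (A : Finset (ZMod n)) = Finset.univ := by
        rw [hAeq]
        ext x
        simp only [Finset.mem_univ, iff_true, Finset.mem_image, Finset.mem_range]
        exact ⟨(x - a).val, lt_of_lt_of_le (ZMod.val_lt _) hkk, by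
          rw [ZMod.natCast_val, ZMod.cast_id]; ring⟩
      have h2 := A.prop.2
      rw [hun, Finset.card_univ, ZMod.card] at h2
      omega
    have hcard : (A : Finset (ZMod n)).card = k := by
      rw [hAeq, Finset.card_image_of_injOn, Finset.card_range]
      intro i hi j hj hij
      simp only [Finset.coe_range, Set.mem_Iio] at hi hj
      have hij' : (i : ZMod n) = (j : ZMod n) := by
        have := hij
        simpa using add_left_cancel this
      have := congrArg ZMod.val hij'
      rwa [ZMod.val_cast_of_lt (by omega), ZMod.val_cast_of_lt (by omega)] at this
    have hk2 : 2 ≤ k := hcard ▸ A.prop.1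
    have hkn2 : k ≤ n - 2 := hcard ▸ A.prop.2
    set b : ZMod n := a + ((k - 1 : ℕ) : ZMod n) with hb
    obtain ⟨v1, v2, v3⟩ := interval_vals hn hk2 hkn2 a
    -- distinctness
    have ck : ((k - 1 : ℕ) : ZMod n) = ((k : ℕ) : ZMod n) - 1 := by
      rw [Nat.cast_sub (by omega), Nat.cast_one]
    have hbb : b = a + (((k : ℕ) : ZMod n) - 1) := by rw [hb, ck]
    have d1 : a ≠ b := by
      intro h; rw [hbb] at h
      refine zmod_natCast_ne_zero (n := n) (t := k - 1) (by omega) (by omega) ?_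
      rw [ck]; linear_combination -h
    have d2 : a ≠ b + 1 := by
      intro h; rw [hbb] at h
      exact zmod_natCast_ne_zero (n := n) (t := k) (by omega) (by omega)
        (by linear_combination -h)
    have d3 : a ≠ a - 1 := by
      intro h
      refine zmod_natCast_ne_zero (n := n) (t := 1) (by omega) (by omega) ?_
      rw [Nat.cast_one]; linear_combination h
    have d4 : b ≠ b + 1 := by
      intro h
      refine zmod_natCast_ne_zero (n := n) (t := 1) (by omega) (by omega) ?_
      rw [Nat.cast_one]; linear_combination -h
    have d5 : b ≠ a - 1 := by
      intro h; rw [hbb] at h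
      exact zmod_natCast_ne_zero (n := n) (t := k) (by omega) (by omega)
        (by linear_combination h)
    have d6 : b + 1 ≠ a - 1 := by
      intro h; rw [hbb] at h
      refine zmod_natCast_ne_zero (n := n) (t := k + 1) (by omega) (by omega) ?_
      push_cast
      linear_combination h
    -- membership of A in the left filter set
    have hmemA := fun x => zmod_mem_image_range_iff (n := n) a (c := k) (by omega) x
    have hmemA' : ∀ x, x ∈ (A : Finset (ZMod n)) ↔ (x - a).val < k := by
      intro x; rw [hAeq]; exact hmemA x
    have maA : a ∈ (A : Finset (ZMod n)) := by
      rw [hmemA', sub_self, ZMod.val_zero]; omega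
    have mbA : b ∈ (A : Finset (ZMod n)) := by
      rw [hmemA', v1]; omega
    have mb1A : b + 1 ∉ (A : Finset (ZMod n)) := by
      rw [hmemA', v2]; omega
    have ma1A : a - 1 ∉ (A : Finset (ZMod n)) := by
      rw [hmemA', v3]; omega
    -- the relation
    have hrel : keelElt n hn a b (b + 1) (a - 1) ∈ KeelRelations n hn :=
      AddSubgroup.subset_closure (Or.inr ⟨a, b, b + 1, a - 1, d1, d2, d3, d4, d5, d6, rfl⟩)
    set π : FreeAbelianGroup (DivIdx n) →+ KeelGroup n hn :=
      QuotientAddGroup.mk' (KeelRelations n hn) with hπ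
    have h0 : π (keelElt n hn a b (b + 1) (a - 1)) = 0 :=
      (QuotientAddGroup.eq_zero_iff _).mpr hrel
    rw [keelElt, map_sub, sub_eq_zero] at h0
    set L : Finset (DivIdx n) := Finset.univ.filter (fun B : DivIdx n =>
      a ∈ B.val ∧ b ∈ B.val ∧ (b + 1) ∉ B.val ∧ (a - 1) ∉ B.val) with hL
    set R : Finset (DivIdx n) := Finset.univ.filter (fun B : DivIdx n =>
      a ∈ B.val ∧ (b + 1) ∈ B.val ∧ b ∉ B.val ∧ (a - 1) ∉ B.val) with hR
    have hAL : A ∈ L := by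
      rw [hL, Finset.mem_filter]
      exact ⟨Finset.mem_univ _, maA, mbA, mb1A, ma1A⟩
    have hsplit : (∑ B ∈ L, FreeAbelianGroup.of B)
        = FreeAbelianGroup.of A + ∑ B ∈ L.erase A, FreeAbelianGroup.of B :=
      (Finset.add_sum_erase L _ hAL).symm
    have h0' : π (∑ B ∈ L, FreeAbelianGroup.of B) = π (∑ B ∈ R, FreeAbelianGroup.of B) := h0
    rw [hsplit, map_add, map_sum, map_sum] at h0'
    have key : π (FreeAbelianGroup.of A)
        = (∑ B ∈ R, π (FreeAbelianGroup.of B)) - ∑ B ∈ L.erase A, π (FreeAbelianGroup.of B) :=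
      eq_sub_of_add_eq h0'
    have hgoal : (QuotientAddGroup.mk (FreeAbelianGroup.of A) : KeelGroup n hn)
        = π (FreeAbelianGroup.of A) := rfl
    rw [hgoal, key]
    refine sub_mem (AddSubgroup.sum_mem _ ?_) (AddSubgroup.sum_mem _ ?_)
    · intro B hB
      rw [hR, Finset.mem_filter] at hB
      obtain ⟨-, haB, hb1B, hbB, ha1B⟩ := hB
      refine AddSubgroup.subset_closure ⟨B, ?_, rfl⟩
      intro hint
      exact not_interval_R hn hk2 hkn2 hint haB hb1B hbB ha1B
    · intro B hB
      rw [Finset.mem_erase, hL, Finset.mem_filter] at hB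
      obtain ⟨hne, -, haB, hbB, hb1B, ha1B⟩ := hB
      refine AddSubgroup.subset_closure ⟨B, ?_, rfl⟩
      intro hint
      apply hne
      apply Subtype.ext
      rw [interval_eq hn hk2 hkn2 hint haB hbB hb1B ha1B, ← hAeq]
  · exact AddSubgroup.subset_closure ⟨A, hA, rfl⟩
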